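/- Let p be a prime and let k be the field with p elements. Let K be a field extension of k and let L be an intermediate field, k ⊆ L ⊆ K. Let γ be a k-monomorphism of K with γ(L) ⊆ L. Let n be a non-negative integer and let X be a subset of K such that γ(x) = x^{p^n} for every x ∈ X. Suppose that every l ∈ L with γ(l) = l^{p^n} lies in k. If X is a transcendence set over k, then X is a transcendence set over L. -/

import Mathlib

open MvPolynomial

section aux
variable {σ R : Type*} [CommSemiring R]

theorem expand_monomial_smul (q : ℕ) (hq : q ≠ 0) (d : σ →₀ ℕ) (r : R) :
    expand q (monomial d r) = monomial (q • d) r := by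
  rw [expand_monomial, monomial_eq]

theorem smul_finsupp_injective (q : ℕ) (hq : q ≠ 0) :
    Function.Injective (fun d : σ →₀ ℕ => q • d) := by
  intro d e h
  ext i
  have := congrArg (fun g : σ →₀ ℕ => g i) h
  simp only [Finsupp.smul_apply, smul_eq_mul] at this
  exact Nat.eq_of_mul_eq_mul_left (Nat.pos_of_ne_zero hq) this

theorem coeff_expand_smul [DecidableEq σ] (q : ℕ) (hq : q ≠ 0) (f : MvPolynomial σ R) (α : σ →₀ ℕ) :
    coeff (q • α) (expand q f) = coeff α f := by
  induction f using MvPolynomial.induction_on' with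
  | monomial d r =>
    rw [expand_monomial_smul q hq, coeff_monomial, coeff_monomial]
    by_cases h : d = α
    · rw [if_pos (by rw [h]), if_pos h]
    · rw [if_neg (fun hc => h (smul_finsupp_injective q hq hc)), if_neg h]
  | add f g hf hg => rw [map_add, coeff_add, coeff_add, hf, hg]

theorem support_expand_subset [DecidableEq σ] (q : ℕ) (hq : q ≠ 0) (f : MvPolynomial σ R) :
    (expand q f).support ⊆ f.support.image (q • ·) := by
  classical
  conv_lhs => rw [← support_sum_monomial_coeff f]
  rw [map_sum]
  refine (MvPolynomial.support_sum).trans ?_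
  intro β hβ
  rw [Finset.mem_biUnion] at hβ
  obtain ⟨α, hα, hβ⟩ := hβ
  rw [expand_monomial_smul q hq] at hβ
  have := support_monomial_subset hβ
  rw [Finset.mem_singleton] at this
  subst this
  exact Finset.mem_image_of_mem _ hα

theorem expand_map_iterateFrobenius (p n : ℕ) [ExpChar R p] (hp : p ≠ 0) (f : MvPolynomial σ R) :
    expand (p ^ n) (MvPolynomial.map (iterateFrobenius R p n) f) = f ^ p ^ n := by
  haveI : ExpChar (MvPolynomial σ R) p :=
    expChar_of_injective_ringHom (C_injective σ R) p
  induction f using MvPolynomial.induction_on' with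
  | monomial d r =>
    rw [map_monomial, iterateFrobenius_def, expand_monomial_smul _ (pow_ne_zero _ hp),
      monomial_pow]
  | add f g hf hg =>
    rw [map_add, map_add, hf, hg, add_pow_expChar_pow]

theorem aeval_expand {A : Type*} [CommSemiring A] [Algebra R A] (x : σ → A) (q : ℕ)
    (f : MvPolynomial σ R) :
    aeval x (expand q f) = aeval (fun i => x i ^ q) f := by
  have h : (aeval x).comp (expand q) = (aeval (fun i => x i ^ q) : MvPolynomial σ R →ₐ[R] A) := by
    apply MvPolynomial.algHom_ext
    intro i
    simp
  exact congrFun (congrArg DFunLike.coe h) f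

end aux

/-- Let `k = 𝔽_p`, `k ⊆ L ⊆ K` fields, and let `γ` be a `k`-monomorphism of
`K` with `γ(L) ⊆ L`.  Suppose `γ` acts on a subset `X ⊆ K` by `p ^ n`-th powering, and that
every `l ∈ L` with `γ l = l ^ (p ^ n)` lies in `k`.  If `X` is a transcendence set over `k`,
then `X` is a transcendence set over `L`. -/
theorem transcendence_set_over_intermediate_field (p : ℕ) [Fact p.Prime]
    (K : Type*) [Field K] [Algebra (ZMod p) K]
    (L : IntermediateField (ZMod p) K)
    (γ : K →ₐ[ZMod p] K) (hγinj : Function.Injective γ)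
    (hγL : ∀ l ∈ L, γ l ∈ L)
    (n : ℕ) (X : Set K) (hγX : ∀ x ∈ X, γ x = x ^ p ^ n)
    (hfix : ∀ l ∈ L, γ l = l ^ p ^ n → ∃ c : ZMod p, algebraMap (ZMod p) K c = l)
    (hX : AlgebraicIndependent (ZMod p) ((↑) : X → K)) :
    AlgebraicIndependent L ((↑) : X → K) := by
  classical
  have hp : p.Prime := Fact.out
  have hq0 : p ^ n ≠ 0 := pow_ne_zero _ hp.ne_zero
  haveI : CharP K p := charP_of_injective_algebraMap (algebraMap (ZMod p) K).injective p
  haveI : CharP (↥L) p := charP_of_injective_algebraMap (algebraMap (ZMod p) ↥L).injective p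
  haveI : ExpChar (↥L) p := .prime hp
  -- the restriction of γ to L
  let γL : (↥L) →+* (↥L) :=
    { toFun := fun l => ⟨γ l, hγL l l.2⟩
      map_one' := Subtype.ext (by simp)
      map_mul' := fun a b => Subtype.ext (by push_cast; simp [map_mul])
      map_zero' := Subtype.ext (by simp)
      map_add' := fun a b => Subtype.ext (by push_cast; simp [map_add]) }
  have hγLval : ∀ l : ↥L, ((γL l : ↥L) : K) = γ ((l : K)) := fun _ => rfl
  rw [algebraicIndependent_iff]
  suffices h : ∀ (m : ℕ) (f : MvPolynomial X (↥L)), f.support.card ≤ m →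
      MvPolynomial.aeval ((↑) : X → K) f = 0 → f = 0 by
    intro f hf
    exact h f.support.card f le_rfl hf
  intro m
  induction m with
  | zero =>
    intro f hcard hf
    exact MvPolynomial.support_eq_empty.mp (Finset.card_eq_zero.mp (Nat.le_zero.mp hcard))
  | succ m ih =>
    intro f hcard hev
    by_contra hf0
    obtain ⟨a, ha⟩ := Finset.nonempty_iff_ne_empty.mpr
      (fun h => hf0 (MvPolynomial.support_eq_empty.mp h))
    set c : ↥L := f.coeff a with hc
    have hcne : c ≠ 0 := MvPolynomial.mem_support_iff.mp ha
    set f' : MvPolynomial X (↥L) := MvPolynomial.C c⁻¹ * f with hf'def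
    have hcoe : ∀ β, f'.coeff β = c⁻¹ * f.coeff β := fun β => MvPolynomial.coeff_C_mul β _ f
    have hsupp' : f'.support = f.support := by
      ext β
      simp only [MvPolynomial.mem_support_iff, hcoe, mul_ne_zero_iff]
      exact and_iff_right (inv_ne_zero hcne)
    have hev' : MvPolynomial.aeval ((↑) : X → K) f' = 0 := by
      rw [hf'def, map_mul, hev, mul_zero]
    have hcoeffa : f'.coeff a = 1 := by rw [hcoe, ← hc, inv_mul_cancel₀ hcne]
    set d : MvPolynomial X (↥L) :=
      MvPolynomial.map γL f' - MvPolynomial.map (iterateFrobenius (↥L) p n) f' with hd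
    have hdcoeff : ∀ β, d.coeff β = γL (f'.coeff β) - (f'.coeff β) ^ p ^ n := by
      intro β
      rw [hd, MvPolynomial.coeff_sub, MvPolynomial.coeff_map, MvPolynomial.coeff_map,
        iterateFrobenius_def]
    have hdsupp : d.support ⊆ f'.support.erase a := by
      intro β hβ
      rw [MvPolynomial.mem_support_iff] at hβ
      rw [Finset.mem_erase, MvPolynomial.mem_support_iff]
      constructor
      · rintro rfl
        exact hβ (by rw [hdcoeff, hcoeffa, map_one, one_pow, sub_self])
      · intro h0
        exact hβ (by rw [hdcoeff, h0, map_zero, zero_pow hq0, sub_self])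
    have hdcard : d.support.card ≤ m := by
      have h1 := Finset.card_le_card hdsupp
      rw [hsupp', Finset.card_erase_of_mem ha] at h1
      omega
    -- the evaluation of `expand (p^n) (map γL f')` is `γ (aeval f')`
    have hkey : MvPolynomial.aeval ((↑) : X → K)
        (MvPolynomial.expand (p ^ n) (MvPolynomial.map γL f')) =
        γ (MvPolynomial.aeval ((↑) : X → K) f') := by
      rw [_root_.aeval_expand, MvPolynomial.aeval_def, MvPolynomial.aeval_def, MvPolynomial.eval₂_map]
      have h2 : γ (MvPolynomial.eval₂ (algebraMap (↥L) K) ((↑) : X → K) f')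
          = MvPolynomial.eval₂ ((γ : K →+* K).comp (algebraMap (↥L) K))
            (⇑γ ∘ ((↑) : X → K)) f' :=
        MvPolynomial.eval₂_comp_left (γ : K →+* K) _ _ f'
      rw [h2]
      congr 1
      · ext l
        exact (hγX (l : K) l.2).symm
    have hexp0 : MvPolynomial.aeval ((↑) : X → K) (MvPolynomial.expand (p ^ n) d) = 0 := by
      rw [hd, map_sub, map_sub, hkey, hev', map_zero,
        expand_map_iterateFrobenius p n hp.ne_zero, map_pow, hev', zero_pow hq0, sub_zero]
    have hexpcard : (MvPolynomial.expand (p ^ n) d).support.card ≤ m := by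
      refine le_trans (Finset.card_le_card (support_expand_subset _ hq0 d)) ?_
      exact le_trans (Finset.card_image_le) hdcard
    have hd0 : d = 0 := by
      have h0 := ih (MvPolynomial.expand (p ^ n) d) hexpcard hexp0
      ext β
      rw [← _root_.coeff_expand_smul (p ^ n) hq0 d β, h0, MvPolynomial.coeff_zero,
        MvPolynomial.coeff_zero]
    -- all coefficients of f' are fixed, hence lie in ZMod p
    have hfixed : ∀ β, γ (((MvPolynomial.coeff β f' : ↥L) : K))
        = ((MvPolynomial.coeff β f' : ↥L) : K) ^ p ^ n := by
      intro β
      have h0 : MvPolynomial.coeff β d = 0 := by rw [hd0]; exact MvPolynomial.coeff_zero β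
      rw [hdcoeff β, sub_eq_zero] at h0
      calc γ (((MvPolynomial.coeff β f' : ↥L) : K))
          = ((γL (MvPolynomial.coeff β f') : ↥L) : K) := rfl
        _ = (((MvPolynomial.coeff β f' ^ p ^ n : ↥L)) : K) := by rw [h0]
        _ = ((MvPolynomial.coeff β f' : ↥L) : K) ^ p ^ n := by push_cast; rfl
    have hZ : ∀ β, ∃ c0 : ZMod p, algebraMap (ZMod p) (↥L) c0 = f'.coeff β := by
      intro β
      obtain ⟨c0, hc0⟩ := hfix ((MvPolynomial.coeff β f' : ↥L) : K) (SetLike.coe_mem _)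
        (hfixed β)
      refine ⟨c0, Subtype.ext ?_⟩
      rw [← hc0, IsScalarTower.algebraMap_apply (ZMod p) (↥L) K c0]
      rfl
    choose c0 hc0 using hZ
    set f₀ : MvPolynomial X (ZMod p) :=
      ∑ β ∈ f'.support, MvPolynomial.monomial β (c0 β) with hf₀
    have hmap : MvPolynomial.map (algebraMap (ZMod p) (↥L)) f₀ = f' := by
      rw [hf₀, map_sum]
      simp_rw [MvPolynomial.map_monomial, hc0]
      exact MvPolynomial.support_sum_monomial_coeff f'
    have hev0 : MvPolynomial.aeval ((↑) : X → K) f₀ = 0 := by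
      have := MvPolynomial.aeval_map_algebraMap (R := ZMod p) (A := ↥L) (B := K)
        ((↑) : X → K) f₀
      rw [hmap] at this
      rw [← this]
      exact hev'
    have hf₀0 : f₀ = 0 := algebraicIndependent_iff.mp hX f₀ hev0
    have : f' = 0 := by rw [← hmap, hf₀0, map_zero]
    rw [this, MvPolynomial.coeff_zero] at hcoeffa
    exact one_ne_zero hcoeffa.symm
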